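/- Let X be a Tychonoff (completely regular Hausdorff) space. The following are equivalent: (1) C(X) with the Vietoris topology τ_V is second countable; (2) (C(X), τ_V) is separable; (3) (C(X), τ_V) satisfies the countable chain condition (every pairwise disjoint family of nonempty open sets is countable); (4) (C(X), τ_V) is Lindelöf; (5) X is compact and metrizable. -/

import Mathlib

open Set Topology TopologicalSpace

/-- The set of values of a set-valued map (identified with its graph) at a point. -/
def valuesAt {X : Type*} (F : Set (X × ℝ)) (x : X) : Set ℝ := {y | (x, y) ∈ F}

/-- A set-valued map (identified with its graph) is cusco: upper semicontinuous at every
point, with nonempty compact convex values. -/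
def IsCusco {X : Type*} [TopologicalSpace X] (F : Set (X × ℝ)) : Prop :=
  (∀ x : X, ∀ V : Set ℝ, IsOpen V → valuesAt F x ⊆ V →
    ∃ U : Set X, IsOpen U ∧ x ∈ U ∧ ∀ u ∈ U, valuesAt F u ⊆ V) ∧
  (∀ x : X, (valuesAt F x).Nonempty ∧ IsCompact (valuesAt F x) ∧ Convex ℝ (valuesAt F x))

/-- A minimal cusco map, i.e. a cusco map containing no proper cusco submap. -/
def IsMinimalCusco {X : Type*} [TopologicalSpace X] (F : Set (X × ℝ)) : Prop :=
  IsCusco F ∧ ∀ G : Set (X × ℝ), IsCusco G → G ⊆ F → G = F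

/-- `L(X)`: all cusco maps from `X` to `ℝ`. -/
def LSet (X : Type*) [TopologicalSpace X] : Set (Set (X × ℝ)) := {F | IsCusco F}

/-- `L₀(X)`: cusco maps that are single-valued at each isolated point. -/
def L0Set (X : Type*) [TopologicalSpace X] : Set (Set (X × ℝ)) :=
  {F | IsCusco F ∧ ∀ x : X, IsOpen ({x} : Set X) → ∃ y : ℝ, valuesAt F x = {y}}

/-- `MC(X)`: all minimal cusco maps from `X` to `ℝ`. -/
def MCSet (X : Type*) [TopologicalSpace X] : Set (Set (X × ℝ)) := {F | IsMinimalCusco F}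

/-- The upper Vietoris topology on a family of subsets of `X × ℝ`. -/
def upperVietoris {X : Type*} [TopologicalSpace X] (S : Set (Set (X × ℝ))) :
    TopologicalSpace S :=
  .generateFrom {U | ∃ W : Set (X × ℝ), IsOpen W ∧ U = {A : S | (A : Set (X × ℝ)) ⊆ W}}

/-- The Vietoris topology on a family of subsets of `X × ℝ`. -/
def vietoris {X : Type*} [TopologicalSpace X] (S : Set (Set (X × ℝ))) :
    TopologicalSpace S :=
  .generateFrom
    ({U | ∃ W : Set (X × ℝ), IsOpen W ∧ U = {A : S | (A : Set (X × ℝ)) ⊆ W}} ∪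
     {U | ∃ W : Set (X × ℝ), IsOpen W ∧ U = {A : S | ((A : Set (X × ℝ)) ∩ W).Nonempty}})

/-- The graph of a function `X → ℝ`. -/
def graphOf {X : Type*} (f : X → ℝ) : Set (X × ℝ) := {p | p.2 = f p.1}

/-- `X` is countably compact: every countable open cover has a finite subcover. -/
def CountablyCompact (X : Type*) [TopologicalSpace X] : Prop :=
  ∀ U : ℕ → Set X, (∀ n, IsOpen (U n)) → (⋃ n, U n) = Set.univ →
    ∃ t : Finset ℕ, (⋃ n ∈ t, U n) = Set.univ

/-- The Vietoris topology on `C(X, ℝ)`, continuous functions being identified with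
their graphs in `X × ℝ`. -/
def cxVietoris (X : Type*) [TopologicalSpace X] : TopologicalSpace C(X, ℝ) :=
  .generateFrom
    ({U | ∃ W : Set (X × ℝ), IsOpen W ∧ U = {f : C(X, ℝ) | graphOf ⇑f ⊆ W}} ∪
     {U | ∃ W : Set (X × ℝ), IsOpen W ∧ U = {f : C(X, ℝ) | (graphOf ⇑f ∩ W).Nonempty}})

/-- A topology satisfies the countable chain condition if every pairwise disjoint
family of nonempty open sets is countable. -/
def HasCCC {Y : Type*} (t : TopologicalSpace Y) : Prop :=
  ∀ 𝒞 : Set (Set Y), (∀ U ∈ 𝒞, IsOpen[t] U ∧ U.Nonempty) → 𝒞.PairwiseDisjoint id →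
    𝒞.Countable

section VietorisHelpers
variable {X : Type*} [TopologicalSpace X]

lemma graphOf_subset_iff (f : C(X,ℝ)) (W : Set (X × ℝ)) :
    graphOf ⇑f ⊆ W ↔ ∀ x, (x, f x) ∈ W := by
  constructor
  · intro h x; exact h (by simp [graphOf])
  · rintro h ⟨x, y⟩ hxy
    simp only [graphOf, mem_setOf_eq] at hxy
    subst hxy; exact h x

lemma isOpen_plus {W : Set (X × ℝ)} (hW : IsOpen W) :
    IsOpen[cxVietoris X] {f : C(X,ℝ) | graphOf ⇑f ⊆ W} :=
  TopologicalSpace.GenerateOpen.basic _ (Or.inl ⟨W, hW, rfl⟩)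

lemma isOpen_minus {W : Set (X × ℝ)} (hW : IsOpen W) :
    IsOpen[cxVietoris X] {f : C(X,ℝ) | (graphOf ⇑f ∩ W).Nonempty} :=
  TopologicalSpace.GenerateOpen.basic _ (Or.inr ⟨W, hW, rfl⟩)

/-- uniform balls are Vietoris-open -/
lemma isOpen_vBall (f : C(X,ℝ)) (ε : ℝ) :
    IsOpen[cxVietoris X] {g : C(X,ℝ) | ∀ x, |g x - f x| < ε} := by
  have hW : IsOpen {p : X × ℝ | |p.2 - f p.1| < ε} := by
    have : Continuous fun p : X × ℝ => |p.2 - f p.1| :=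
      (continuous_snd.sub (f.continuous.comp continuous_fst)).abs
    exact isOpen_lt this continuous_const
  have := isOpen_plus (X := X) hW
  convert this using 1
  ext g
  simp [graphOf_subset_iff]

/-- evaluation sets are Vietoris-open -/
lemma isOpen_evalSet [T2Space X] (x : X) {O : Set ℝ} (hO : IsOpen O) :
    IsOpen[cxVietoris X] {g : C(X,ℝ) | g x ∈ O} := by
  have hW : IsOpen ({p : X × ℝ | p.1 ≠ x} ∪ {p | p.2 ∈ O}) := by
    apply IsOpen.union
    · exact isOpen_ne_fun continuous_fst continuous_const
    · exact hO.preimage continuous_snd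
  have := isOpen_plus (X := X) hW
  convert this using 1
  ext g
  simp only [mem_setOf_eq, graphOf_subset_iff]
  constructor
  · intro h y
    by_cases hy : y = x
    · subst hy; exact Or.inr h
    · exact Or.inl hy
  · intro h
    rcases h x with h' | h'
    · exact absurd rfl h'
    · exact h'


section Pseudo
variable {X : Type*} [TopologicalSpace X]

/-- key separation estimate -/
lemma ball_disjoint_aux (f : C(X,ℝ)) (hub : ∀ M : ℝ, ∃ x, M < |f x|)
    {c c' : ℝ} (hcc : c ≠ c') {g : C(X,ℝ)}
    (hg : ∀ x, |g x - (c • f) x| < 1) (hg' : ∀ x, |g x - (c' • f) x| < 1) : False := by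
  have hδ : 0 < |c - c'| := by
    rw [abs_pos, sub_ne_zero]; exact hcc
  obtain ⟨x, hx⟩ := hub (2 / |c - c'|)
  have h1 := hg x
  have h2 := hg' x
  simp only [ContinuousMap.smul_apply, smul_eq_mul] at h1 h2
  have key : |c - c'| * |f x| < 2 := by
    have : |c - c'| * |f x| = |(g x - c' * f x) - (g x - c * f x)| := by
      rw [← abs_mul]
      congr 1
      ring
    rw [this]
    calc |(g x - c' * f x) - (g x - c * f x)|
        ≤ |g x - c' * f x| + |g x - c * f x| := abs_sub _ _
      _ < 2 := by linarith
  have : 2 < |c - c'| * |f x| := by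
    rw [div_lt_iff₀ hδ] at hx; linarith [mul_comm (|f x|) (|c - c'|)]
  linarith

lemma bounded_of_ccc [T2Space X] (h : HasCCC (cxVietoris X)) (f : C(X,ℝ)) :
    ∃ M : ℝ, ∀ x, |f x| ≤ M := by
  by_contra hb
  push_neg at hb
  have hub : ∀ M : ℝ, ∃ x, M < |f x| := fun M => hb M
  set B : ℝ → Set C(X,ℝ) := fun c => {g | ∀ x, |g x - (c • f) x| < 1} with hB
  have hmem : ∀ c, (c • f) ∈ B c := by
    intro c; intro x; simp
  have hinj : Function.Injective B := by
    intro c c' hcc'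
    by_contra hne
    have h1 := hmem c
    have h2 : (c • f) ∈ B c' := hcc' ▸ h1
    exact ball_disjoint_aux f hub hne h1 h2
  have hcount : (Set.range B).Countable := by
    apply h
    · rintro U ⟨c, rfl⟩
      exact ⟨isOpen_vBall (c • f) 1, ⟨c • f, hmem c⟩⟩
    · rintro U ⟨c, rfl⟩ V ⟨c', rfl⟩ hUV
      have hcc : c ≠ c' := fun hc => hUV (by rw [hc])
      rw [Function.onFun, disjoint_left]
      rintro g hg hg'
      exact ball_disjoint_aux f hub hcc hg hg'
  have : Countable ℝ := by
    have := hcount.to_subtype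
    exact Function.Injective.countable (f := fun c : ℝ => (⟨B c, ⟨c, rfl⟩⟩ : Set.range B))
      (fun a b hab => hinj (congrArg Subtype.val hab))
  exact Cardinal.not_countable_real (Set.countable_univ)
end Pseudo

section Pseudo2
variable {X : Type*} [TopologicalSpace X]

lemma bounded_of_lindelof [T2Space X] (h : @LindelofSpace C(X,ℝ) (cxVietoris X))
    (f : C(X,ℝ)) : ∃ M : ℝ, ∀ x, |f x| ≤ M := by
  by_contra hb
  push_neg at hb
  have hub : ∀ M : ℝ, ∃ x, M < |f x| := fun M => hb M
  letI := cxVietoris X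
  haveI : LindelofSpace C(X,ℝ) := h
  obtain ⟨x₁, hx₁⟩ := hub 0
  have hfx₁ : f x₁ ≠ 0 := by intro h0; rw [h0] at hx₁; simp at hx₁
  set K : Set C(X,ℝ) := Set.range (fun c : ℝ => c • f) with hK
  have hKclosed : IsClosed K := by
    rw [← isOpen_compl_iff, isOpen_iff_forall_mem_open]
    intro g hg
    set c₀ : ℝ := g x₁ / f x₁ with hc₀
    have hgc₀ : g ≠ c₀ • f := by
      intro he; exact hg ⟨c₀, he.symm⟩
    have hx₂ : ∃ x₂, g x₂ ≠ c₀ * f x₂ := by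
      by_contra hc; push_neg at hc
      apply hgc₀; ext x; simp [hc x]
    obtain ⟨x₂, hx₂⟩ := hx₂
    set ε : ℝ := |g x₂ - c₀ * f x₂| with hε
    have hεpos : 0 < ε := by rw [hε, abs_pos, sub_ne_zero]; exact hx₂
    set δ : ℝ := ε / (2 * (|f x₂| + 1)) with hδ
    have hδpos : 0 < δ := by
      apply div_pos hεpos; positivity
    refine ⟨{h' : C(X,ℝ) | h' x₁ ∈ Metric.ball (g x₁) (δ * |f x₁|)} ∩
      {h' : C(X,ℝ) | h' x₂ ∈ Metric.ball (g x₂) (ε/2)}, ?_, ?_, ?_, ?_⟩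
    · rintro h' ⟨h1, h2⟩ ⟨c, rfl⟩
      simp only [mem_setOf_eq, Metric.mem_ball, Real.dist_eq, ContinuousMap.smul_apply,
        smul_eq_mul] at h1 h2
      have hc₀x₁ : c₀ * f x₁ = g x₁ := by
        rw [hc₀]; field_simp
      have hcc₀ : |c - c₀| < δ := by
        have : |c - c₀| * |f x₁| < δ * |f x₁| := by
          rw [← abs_mul]
          calc |(c - c₀) * f x₁| = |c * f x₁ - g x₁| := by rw [← hc₀x₁]; ring_nf
            _ < δ * |f x₁| := h1
        have hfx₁' : 0 < |f x₁| := abs_pos.mpr hfx₁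
        exact lt_of_mul_lt_mul_right this (le_of_lt hfx₁')
      have : ε ≤ |g x₂ - c * f x₂| + |c - c₀| * |f x₂| := by
        calc ε = |g x₂ - c₀ * f x₂| := hε
          _ = |(g x₂ - c * f x₂) + (c - c₀) * f x₂| := by ring_nf
          _ ≤ |g x₂ - c * f x₂| + |(c - c₀) * f x₂| := abs_add_le _ _
          _ = |g x₂ - c * f x₂| + |c - c₀| * |f x₂| := by rw [abs_mul]
      have hδf : |c - c₀| * |f x₂| < ε / 2 := by
        have h2' : δ * |f x₂| < ε / 2 := by
          rw [hδ, div_mul_eq_mul_div, div_lt_div_iff₀ (by positivity) (by norm_num : (0:ℝ) < 2)]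
          nlinarith [abs_nonneg (f x₂)]
        calc |c - c₀| * |f x₂| ≤ δ * |f x₂| :=
              mul_le_mul_of_nonneg_right (le_of_lt hcc₀) (abs_nonneg _)
          _ < ε / 2 := h2'
      have h2' : |c * f x₂ - g x₂| < ε / 2 := h2
      rw [abs_sub_comm] at h2'
      linarith
    · apply IsOpen.inter
      · exact isOpen_evalSet x₁ Metric.isOpen_ball
      · exact isOpen_evalSet x₂ Metric.isOpen_ball
    · simp only [mem_setOf_eq, Metric.mem_ball, dist_self]
      positivity
    · simp only [mem_setOf_eq, Metric.mem_ball, dist_self]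
      positivity
  set U : Option ℝ → Set C(X,ℝ) :=
    fun i => Option.elim i Kᶜ (fun c => {g | ∀ x, |g x - (c • f) x| < 1}) with hU
  have hopen : ∀ i, IsOpen (U i) := by
    rintro (_ | c)
    · exact hKclosed.isOpen_compl
    · exact isOpen_vBall (c • f) 1
  have hcover : (univ : Set C(X,ℝ)) ⊆ ⋃ i, U i := by
    intro g _
    by_cases hgK : g ∈ K
    · obtain ⟨c, rfl⟩ := hgK
      exact mem_iUnion.mpr ⟨some c, by intro x; simp⟩
    · exact mem_iUnion.mpr ⟨none, hgK⟩
  obtain ⟨r, hrc, hrcov⟩ := isLindelof_univ.elim_countable_subcover U hopen hcover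
  have hsome : ∀ c : ℝ, (some c : Option ℝ) ∈ r := by
    intro c
    have := hrcov (mem_univ (c • f))
    rw [mem_iUnion₂] at this
    obtain ⟨i, hir, hmem⟩ := this
    rcases i with _ | c'
    · exact absurd ⟨c, rfl⟩ hmem
    · rcases eq_or_ne c c' with rfl | hne
      · exact hir
      · exact absurd hmem (by
          intro hmem'
          exact ball_disjoint_aux f hub hne (fun x => by simp) hmem')
  have : Countable ℝ := by
    have := hrc.to_subtype
    exact Function.Injective.countable (f := fun c : ℝ => (⟨some c, hsome c⟩ : r))
      (fun a b hab => by
        have := congrArg Subtype.val hab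
        exact Option.some_injective ℝ this)
  exact Cardinal.not_countable_real (Set.countable_univ)
end Pseudo2

section DenseLemma
variable {X : Type*} [TopologicalSpace X]

lemma dense_of_lindelof [T2Space X] (h : @LindelofSpace C(X,ℝ) (cxVietoris X)) :
    ∃ D : Set C(X,ℝ), D.Countable ∧
      ∀ f : C(X,ℝ), ∀ ε : ℝ, 0 < ε → ∃ g ∈ D, ∀ x, |f x - g x| < ε := by
  letI := cxVietoris X
  haveI : LindelofSpace C(X,ℝ) := h
  have key : ∀ ε : ℝ, 0 < ε → ∃ Dε : Set C(X,ℝ), Dε.Countable ∧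
      ∀ f : C(X,ℝ), ∃ g ∈ Dε, ∀ x, |f x - g x| < ε := by
    intro ε hε
    obtain ⟨r, hrc, hrcov⟩ := isLindelof_univ.elim_countable_subcover
      (fun g : C(X,ℝ) => {h' | ∀ x, |h' x - g x| < ε}) (fun g => isOpen_vBall g ε)
      (fun f _ => mem_iUnion.mpr ⟨f, fun x => by simpa using hε⟩)
    refine ⟨r, hrc, fun f => ?_⟩
    obtain ⟨g, hgr, hfg⟩ := mem_iUnion₂.mp (hrcov (mem_univ f))
    exact ⟨g, hgr, hfg⟩
  choose D hDc hDd using fun n : ℕ => key (1/((n:ℝ)+1)) (by positivity)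
  refine ⟨⋃ n, D n, countable_iUnion hDc, ?_⟩
  intro f ε hε
  obtain ⟨n, hn⟩ := exists_nat_one_div_lt hε
  obtain ⟨g, hg, hfg⟩ := hDd n f
  exact ⟨g, mem_iUnion.mpr ⟨n, hg⟩, fun x => lt_trans (hfg x) hn⟩

lemma dense_of_ccc [T2Space X] (h : HasCCC (cxVietoris X)) :
    ∃ D : Set C(X,ℝ), D.Countable ∧
      ∀ f : C(X,ℝ), ∀ ε : ℝ, 0 < ε → ∃ g ∈ D, ∀ x, |f x - g x| < ε := by
  have key : ∀ ε : ℝ, 0 < ε → ∃ Dε : Set C(X,ℝ), Dε.Countable ∧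
      ∀ f : C(X,ℝ), ∃ g ∈ Dε, ∀ x, |f x - g x| < ε := by
    intro ε hε
    set S : Set (Set C(X,ℝ)) :=
      {A | ∀ f ∈ A, ∀ g ∈ A, f ≠ g → ∃ x, ε ≤ |f x - g x|} with hS
    obtain ⟨A, hAmax⟩ := zorn_subset S (by
      intro c hcS hchain
      refine ⟨⋃₀ c, ?_, fun s hs => subset_sUnion_of_mem hs⟩
      rintro f ⟨s, hsc, hfs⟩ g ⟨t, htc, hgt⟩ hfg
      rcases hchain.total hsc htc with hst | hts
      · exact hcS htc f (hst hfs) g hgt hfg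
      · exact hcS hsc f hfs g (hts hgt) hfg)
    have hAP : A ∈ S := hAmax.prop
    -- A is countable via ccc
    have hAc : A.Countable := by
      have himgc : ((fun g : C(X,ℝ) => {h' : C(X,ℝ) | ∀ x, |h' x - g x| < ε/2}) '' A).Countable := by
        apply h
        · rintro U ⟨g, _, rfl⟩
          exact ⟨isOpen_vBall g (ε/2), ⟨g, fun x => by simpa using by positivity⟩⟩
        · rintro U ⟨g, hgA, rfl⟩ V ⟨g', hg'A, rfl⟩ hUV
          have hgg' : g ≠ g' := fun hgg => hUV (by rw [hgg])
          rw [Function.onFun, disjoint_left]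
          rintro k hk hk'
          obtain ⟨x, hx⟩ := hAP g hgA g' hg'A hgg'
          have h1 := hk x
          have h2 := hk' x
          have : |g x - g' x| < ε := by
            calc |g x - g' x| = |(g' x - k x) - (g x - k x)|  := by
                  rw [abs_sub_comm]; ring_nf
              _ ≤ |g' x - k x| + |g x - k x| := abs_sub _ _
              _ < ε/2 + ε/2 := by
                  rw [abs_sub_comm (g' x), abs_sub_comm (g x)]
                  exact add_lt_add h2 h1
              _ = ε := by ring
          linarith
      refine MapsTo.countable_of_injOn (mapsTo_image _ A) ?_ himgc
      intro g hgA g' hg'A heq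
      by_contra hne
      obtain ⟨x, hx⟩ := hAP g hgA g' hg'A hne
      have heq' : {h' : C(X,ℝ) | ∀ x, |h' x - g x| < ε/2}
          = {h' : C(X,ℝ) | ∀ x, |h' x - g' x| < ε/2} := heq
      have hgmem : g ∈ {h' : C(X,ℝ) | ∀ x, |h' x - g x| < ε/2} := by
        intro x'; simpa using by positivity
      rw [heq'] at hgmem
      have := hgmem x
      linarith
    refine ⟨A, hAc, fun f => ?_⟩
    by_cases hfA : f ∈ A
    · exact ⟨f, hfA, fun x => by simpa using hε⟩
    · have : ¬ (insert f A ∈ S) := by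
        intro hmem
        have := hAmax.eq_of_subset hmem (subset_insert f A)
        exact hfA (this ▸ mem_insert f A)
      simp only [hS, mem_setOf_eq] at this
      push_neg at this
      obtain ⟨a, ha, b, hb, hab, hclose⟩ := this
      rcases ha with rfl | haA
      · rcases hb with rfl | hbA
        · exact absurd rfl hab
        · exact ⟨b, hbA, hclose⟩
      · rcases hb with rfl | hbA
        · exact ⟨a, haA, fun x => by rw [abs_sub_comm]; exact hclose x⟩
        · obtain ⟨x, hx⟩ := hAP a haA b hbA hab
          exact absurd (hclose x) (not_lt.mpr hx)
  choose D hDc hDd using fun n : ℕ => key (1/((n:ℝ)+1)) (by positivity)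
  refine ⟨⋃ n, D n, countable_iUnion hDc, ?_⟩
  intro f ε hε
  obtain ⟨n, hn⟩ := exists_nat_one_div_lt hε
  obtain ⟨g, hg, hfg⟩ := hDd n f
  exact ⟨g, mem_iUnion.mpr ⟨n, hg⟩, fun x => lt_trans (hfg x) hn⟩
end DenseLemma

section Metrize
variable {X : Type*} [TopologicalSpace X]

lemma metrizable_of_dense [T2Space X] [CompletelyRegularSpace X]
    (D : Set C(X,ℝ)) (hDc : D.Countable)
    (hDd : ∀ f : C(X,ℝ), ∀ ε : ℝ, 0 < ε → ∃ g ∈ D, ∀ x, |f x - g x| < ε) :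
    MetrizableSpace X := by
  have hsep : ∀ (x : X) (K : Set X), IsClosed K → x ∉ K →
      ∃ g ∈ D, g x < 1/4 ∧ ∀ y ∈ K, 3/4 ≤ g y := by
    intro x K hK hxK
    obtain ⟨f, hf, hfx, hfK⟩ := CompletelyRegularSpace.completely_regular x K hK hxK
    set f' : C(X,ℝ) := ⟨fun y => (f y : ℝ), continuous_subtype_val.comp hf⟩ with hf'
    obtain ⟨g, hgD, hg⟩ := hDd f' (1/4) (by norm_num)
    have hfx' : f' x = 0 := by simp [hf', hfx]
    refine ⟨g, hgD, ?_, ?_⟩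
    · have h1 := hg x
      rw [hfx'] at h1
      have := abs_lt.mp h1
      linarith [this.1]
    · intro y hy
      have h1 := hg y
      have hfy : f' y = 1 := by
        have : f y = 1 := hfK hy
        simp [hf', this]
      rw [hfy] at h1
      have := abs_lt.mp h1
      linarith [this.1]
  haveI : Countable D := hDc.to_subtype
  set e : X → (D → ℝ) := fun x g => (g : C(X,ℝ)) x with he
  have hcont : Continuous e := continuous_pi fun g => (g : C(X,ℝ)).continuous
  have hinj : Function.Injective e := by
    intro x y hxy
    by_contra hne
    obtain ⟨g, hgD, hgx, hgy⟩ := hsep x {y} isClosed_singleton (by simpa using hne)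
    have : e x ⟨g, hgD⟩ = e y ⟨g, hgD⟩ := by rw [hxy]
    simp only [he] at this
    have := hgy y rfl
    linarith
  have hind : IsInducing e := by
    constructor
    apply le_antisymm
    · exact continuous_iff_le_induced.mp hcont
    · intro U hU
      have key : ∀ x : U, ∃ V : Set (D → ℝ), IsOpen V ∧ (x : X) ∈ e ⁻¹' V ∧ e ⁻¹' V ⊆ U := by
        rintro ⟨x, hx⟩
        obtain ⟨g, hgD, hgx, hgK⟩ := hsep x Uᶜ hU.isClosed_compl (by simpa using hx)
        refine ⟨{h : D → ℝ | h ⟨g, hgD⟩ < 1/4}, ?_, ?_, ?_⟩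
        · exact isOpen_lt (continuous_apply _) continuous_const
        · simpa [he] using hgx
        · intro y hy
          by_contra hyU
          have h34 := hgK y hyU
          have : e y ⟨g, hgD⟩ < 1/4 := hy
          simp only [he] at this
          linarith
      choose V hVo hVmem hVsub using key
      rw [isOpen_induced_iff]
      refine ⟨⋃ x : U, V x, isOpen_iUnion hVo, ?_⟩
      rw [preimage_iUnion]
      apply Subset.antisymm
      · exact iUnion_subset hVsub
      · intro x hx
        exact mem_iUnion.mpr ⟨⟨x, hx⟩, hVmem ⟨x, hx⟩⟩
  exact IsEmbedding.metrizableSpace ⟨hind, hinj⟩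
end Metrize

section CompactOf
variable {X : Type*} [TopologicalSpace X]

lemma compact_of_pseudo_metrizable (hm : MetrizableSpace X)
    (hb : ∀ f : C(X,ℝ), ∃ M : ℝ, ∀ x, |f x| ≤ M) : CompactSpace X := by
  classical
  letI : MetricSpace X := TopologicalSpace.metrizableSpaceMetric X
  have htb : TotallyBounded (univ : Set X) := by
    by_contra htb
    rw [Metric.totallyBounded_iff] at htb
    push_neg at htb
    obtain ⟨ε, hε, hcov⟩ := htb
    have pick : ∀ t : Finset X, ∃ x : X, ∀ y ∈ t, ε ≤ dist x y := by
      intro t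
      have := hcov ↑t t.finite_toSet
      rw [not_subset] at this
      obtain ⟨x, -, hx⟩ := this
      refine ⟨x, fun y hy => ?_⟩
      by_contra hlt
      exact hx (mem_biUnion hy (by rw [Metric.mem_ball]; exact not_le.mp hlt))
    choose p hp using pick
    set v : ℕ → Finset X := fun n => Nat.rec ∅ (fun _ vn => insert (p vn) vn) n with hv
    set u : ℕ → X := fun n => p (v n) with hu
    have hmono : Monotone v := monotone_nat_of_le_succ (fun n => Finset.le_iff_subset.mpr (Finset.subset_insert _ _))
    have humem : ∀ n, u n ∈ v (n+1) := fun n => Finset.mem_insert_self _ _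
    have hsep : ∀ m n, m < n → ε ≤ dist (u n) (u m) := by
      intro m n hmn
      exact hp (v n) (u m) (Finset.le_iff_subset.mp (hmono hmn) (humem m))
    have huinj : Function.Injective u := by
      intro m n hmn
      by_contra hne
      rcases Nat.lt_or_ge m n with hlt | hge
      · have := hsep m n hlt
        rw [hmn, dist_self] at this; linarith
      · have hlt : n < m := lt_of_le_of_ne hge (Ne.symm hne)
        have := hsep n m hlt
        rw [hmn, dist_self] at this; linarith
    have hsep' : ∀ m n, m ≠ n → ε ≤ dist (u n) (u m) := by
      intro m n hmn
      rcases Nat.lt_or_ge m n with hlt | hge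
      · exact hsep m n hlt
      · rw [dist_comm]
        exact hsep n m (lt_of_le_of_ne hge (Ne.symm hmn))
    set S : Set X := Set.range u with hSdef
    have hSclosed : IsClosed S := by
      rw [← isOpen_compl_iff, Metric.isOpen_iff]
      intro x hx
      by_cases hc : ∃ n, dist x (u n) < ε/2
      · obtain ⟨n, hn⟩ := hc
        have hdxn : 0 < dist x (u n) := by
          rw [dist_pos]
          intro h
          exact hx ⟨n, h.symm⟩
        refine ⟨min (dist x (u n)) (ε/2), lt_min hdxn (by positivity), ?_⟩
        rintro y hy ⟨m, rfl⟩
        rw [Metric.mem_ball] at hy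
        rcases eq_or_ne m n with rfl | hmn
        · rw [dist_comm] at hy
          have := min_le_left (dist x (u m)) (ε/2)
          linarith
        · have h1 : dist (u m) (u n) ≤ dist (u m) x + dist x (u n) := dist_triangle _ _ _
          have h2 := hsep' n m (Ne.symm hmn)
          have := min_le_right (dist x (u n)) (ε/2)
          linarith
      · push_neg at hc
        refine ⟨ε/2, by positivity, ?_⟩
        rintro y hy ⟨m, rfl⟩
        rw [Metric.mem_ball] at hy
        have := hc m
        rw [dist_comm] at hy
        linarith
    have hSdisc : DiscreteTopology S := by
      rw [discreteTopology_iff_isOpen_singleton]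
      rintro ⟨x, n, rfl⟩
      have hset : {(⟨u n, ⟨n, rfl⟩⟩ : S)} = (Subtype.val : S → X) ⁻¹' (Metric.ball (u n) ε) := by
        ext ⟨y, m, rfl⟩
        simp only [mem_singleton_iff, mem_preimage, Metric.mem_ball, Subtype.mk.injEq]
        constructor
        · intro h; rw [show u m = u n from congrArg Subtype.val h]; simpa using hε
        · intro h
          rcases eq_or_ne m n with rfl | hmn
          · rfl
          · exact absurd h (not_lt.mpr (hsep' n m (Ne.symm hmn)))
      rw [hset]
      exact IsOpen.preimage continuous_subtype_val Metric.isOpen_ball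
    have huinj' := huinj
    set eqv := Equiv.ofInjective u huinj with heqv
    set vfun : C(S, ℝ) := ⟨fun s => ((eqv.symm s : ℕ) : ℝ), continuous_of_discreteTopology⟩ with hvfun
    obtain ⟨g, hg⟩ := vfun.exists_restrict_eq hSclosed
    obtain ⟨M, hM⟩ := hb g
    set n : ℕ := ⌈M⌉₊ + 1 with hn
    have hgn : g (u n) = n := by
      have hrep := congrFun (congrArg DFunLike.coe hg) ⟨u n, ⟨n, rfl⟩⟩
      simp only [ContinuousMap.restrict_apply] at hrep
      rw [hrep, hvfun]
      simp only [ContinuousMap.coe_mk]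
      norm_cast
      have heq2 : (⟨u n, ⟨n, rfl⟩⟩ : S) = eqv n := rfl
      rw [heq2, Equiv.symm_apply_apply]
    have h1 := hM (u n)
    rw [hgn] at h1
    have h2 : (n : ℝ) ≤ M := le_trans (le_abs_self _) h1
    have h3 : M < n := by
      rw [hn]
      push_cast
      calc M ≤ ⌈M⌉₊ := Nat.le_ceil M
        _ < ⌈M⌉₊ + 1 := by linarith
    linarith
  have hcomplete : CompleteSpace X := by
    by_contra hnc
    have hseq : ¬ ∀ w : ℕ → X, CauchySeq w → ∃ a, Filter.Tendsto w Filter.atTop (nhds a) :=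
      fun hh => hnc (Metric.complete_of_cauchySeq_tendsto hh)
    push_neg at hseq
    obtain ⟨w, hw, hnolim⟩ := hseq
    have hcu : CauchySeq (fun k => (w k : UniformSpace.Completion X)) :=
      hw.map (UniformSpace.Completion.uniformContinuous_coe X)
    obtain ⟨l, hl⟩ := cauchySeq_tendsto_of_complete hcu
    have hlnot : ∀ x : X, (x : UniformSpace.Completion X) ≠ l := by
      intro x hx
      apply hnolim x
      rw [← hx] at hl
      exact ((UniformSpace.Completion.isUniformEmbedding_coe X).isEmbedding.tendsto_nhds_iff).mpr hl
    set F : C(X, ℝ) := ⟨fun x => 1 / dist (x : UniformSpace.Completion X) l, by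
      apply Continuous.div continuous_const
      · exact Continuous.dist (UniformSpace.Completion.continuous_coe X) continuous_const
      · intro x
        exact ne_of_gt (dist_pos.mpr (hlnot x))⟩ with hF
    obtain ⟨M, hM⟩ := hb F
    set M' : ℝ := max M 1 with hM'
    have hM'pos : 0 < M' := lt_of_lt_of_le one_pos (le_max_right _ _)
    have hdist0 : Filter.Tendsto (fun k => dist ((w k : UniformSpace.Completion X)) l)
        Filter.atTop (nhds 0) := by
      rw [← tendsto_iff_dist_tendsto_zero]
      exact hl
    obtain ⟨k, hk⟩ := (hdist0.eventually (gt_mem_nhds (by positivity : (0:ℝ) < 1/M'))).exists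
    have hdpos : 0 < dist ((w k : UniformSpace.Completion X)) l :=
      dist_pos.mpr (hlnot (w k))
    have hFk : M' < F (w k) := by
      rw [hF]
      simp only [ContinuousMap.coe_mk]
      rw [lt_div_iff₀ hdpos]
      calc M' * dist ((w k : UniformSpace.Completion X)) l < M' * (1/M') :=
            mul_lt_mul_of_pos_left hk hM'pos
        _ = 1 := by field_simp
    have hb1 := hM (w k)
    have hb2 : F (w k) ≤ M := le_trans (le_abs_self _) hb1
    have hb3 : M ≤ M' := le_max_left _ _
    linarith
  exact ⟨isCompact_iff_totallyBounded_isComplete.mpr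
    ⟨htb, completeSpace_iff_isComplete_univ.mp hcomplete⟩⟩
end CompactOf

section FiveOne
variable {X : Type*} [TopologicalSpace X]

lemma graph_eq_range (f : C(X,ℝ)) : graphOf ⇑f = Set.range (fun x => (x, f x)) := by
  ext ⟨a, b⟩
  simp only [graphOf, mem_setOf_eq, mem_range, Prod.mk.injEq]
  constructor
  · intro h; exact ⟨a, rfl, h.symm⟩
  · rintro ⟨x, rfl, rfl⟩; rfl

lemma secondCountable_of_compact_metrizable [T2Space X]
    (hc : CompactSpace X) (hm : MetrizableSpace X) :
    @SecondCountableTopology C(X,ℝ) (cxVietoris X) := by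
  letI : MetricSpace X := TopologicalSpace.metrizableSpaceMetric X
  haveI : SecondCountableTopology X := inferInstance
  haveI : SecondCountableTopology (X × ℝ) := inferInstance
  obtain ⟨ℬ, hℬc, -, hℬ⟩ := exists_countable_basis (X × ℝ)
  have hgcomp : ∀ f : C(X,ℝ), IsCompact (graphOf ⇑f) := by
    intro f
    rw [graph_eq_range]
    exact isCompact_range (continuous_id.prodMk f.continuous)
  set 𝒮₁ : Set (Set C(X,ℝ)) :=
    (fun s : Set (Set (X×ℝ)) => {f : C(X,ℝ) | graphOf ⇑f ⊆ ⋃₀ s}) ''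
      {s | s.Finite ∧ s ⊆ ℬ} with h𝒮₁
  set 𝒮₂ : Set (Set C(X,ℝ)) :=
    (fun B : Set (X×ℝ) => {f : C(X,ℝ) | (graphOf ⇑f ∩ B).Nonempty}) '' ℬ with h𝒮₂
  have hcount : (𝒮₁ ∪ 𝒮₂).Countable :=
    ((countable_setOf_finite_subset hℬc).image _).union (hℬc.image _)
  refine @SecondCountableTopology.mk C(X,ℝ) (cxVietoris X) ⟨𝒮₁ ∪ 𝒮₂, hcount, ?_⟩
  apply le_antisymm
  · -- cxVietoris ≤ generateFrom 𝒮 : each member of 𝒮 is Vietoris-open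
    apply le_generateFrom
    rintro U (⟨s, ⟨hsfin, hsℬ⟩, rfl⟩ | ⟨B, hB, rfl⟩)
    · exact isOpen_plus (isOpen_sUnion fun B hB => hℬ.isOpen (hsℬ hB))
    · exact isOpen_minus (hℬ.isOpen hB)
  · -- generateFrom 𝒮 ≤ cxVietoris
    rw [cxVietoris]
    apply le_generateFrom
    rintro U (⟨W, hW, rfl⟩ | ⟨W, hW, rfl⟩)
    · -- W⁺ is a union of members of 𝒮₁
      have hequ : {f : C(X,ℝ) | graphOf ⇑f ⊆ W} =
          ⋃₀ {U | ∃ s : Set (Set (X×ℝ)), s.Finite ∧ s ⊆ ℬ ∧ ⋃₀ s ⊆ W ∧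
            U = {f : C(X,ℝ) | graphOf ⇑f ⊆ ⋃₀ s}} := by
        apply Subset.antisymm
        · intro f hf
          simp only [mem_setOf_eq] at hf
          -- cover the compact graph by basis elements inside W
          have hcov : ∀ p : graphOf ⇑f, ∃ B ∈ ℬ, (p : X × ℝ) ∈ B ∧ B ⊆ W := by
            rintro ⟨p, hp⟩
            obtain ⟨B, hB, hpB, hBW⟩ := hℬ.exists_subset_of_mem_open (hf hp) hW
            exact ⟨B, hB, hpB, hBW⟩
          choose Bf hBfℬ hBfmem hBfW using hcov
          obtain ⟨t, ht⟩ := (hgcomp f).elim_finite_subcover Bf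
            (fun p => hℬ.isOpen (hBfℬ p)) (fun p hp => mem_iUnion.mpr ⟨⟨p, hp⟩, hBfmem ⟨p, hp⟩⟩)
          refine mem_sUnion.mpr ⟨{g : C(X,ℝ) | graphOf ⇑g ⊆ ⋃₀ (Bf '' ↑t)}, ?_, ?_⟩
          · refine ⟨Bf '' ↑t, (t.finite_toSet.image _), ?_, ?_, rfl⟩
            · rintro B ⟨p, -, rfl⟩; exact hBfℬ p
            · rintro q ⟨B, ⟨p, -, rfl⟩, hq⟩; exact hBfW p hq
          · intro q hq
            obtain ⟨p, hpt, hpB⟩ := mem_iUnion₂.mp (ht hq)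
            exact ⟨Bf p, ⟨p, hpt, rfl⟩, hpB⟩
        · rintro f ⟨U, ⟨s, -, -, hsW, rfl⟩, hfU⟩
          exact fun p hp => hsW (hfU hp)
      rw [hequ]
      apply TopologicalSpace.GenerateOpen.sUnion
      rintro U ⟨s, hsfin, hsℬ, -, rfl⟩
      exact TopologicalSpace.GenerateOpen.basic _ (Or.inl ⟨s, ⟨hsfin, hsℬ⟩, rfl⟩)
    · -- W⁻ is a union of members of 𝒮₂
      have hequ : {f : C(X,ℝ) | (graphOf ⇑f ∩ W).Nonempty} =
          ⋃₀ {U | ∃ B ∈ ℬ, B ⊆ W ∧ U = {f : C(X,ℝ) | (graphOf ⇑f ∩ B).Nonempty}} := by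
        apply Subset.antisymm
        · rintro f ⟨p, hpg, hpW⟩
          obtain ⟨B, hB, hpB, hBW⟩ := hℬ.exists_subset_of_mem_open hpW hW
          exact mem_sUnion.mpr ⟨_, ⟨B, hB, hBW, rfl⟩, ⟨p, hpg, hpB⟩⟩
        · rintro f ⟨U, ⟨B, -, hBW, rfl⟩, ⟨p, hpg, hpB⟩⟩
          exact ⟨p, hpg, hBW hpB⟩
      rw [hequ]
      apply TopologicalSpace.GenerateOpen.sUnion
      rintro U ⟨B, hB, -, rfl⟩
      exact TopologicalSpace.GenerateOpen.basic _ (Or.inr ⟨B, hB, rfl⟩)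
end FiveOne

end VietorisHelpers

/-- For a Tychonoff space `X`, the following are equivalent: `(C(X), τ_V)` is second
countable; separable; ccc; Lindelöf; `X` is compact and metrizable. -/
theorem cxVietoris_countability_tfae {X : Type*} [TopologicalSpace X] [T2Space X]
    [CompletelyRegularSpace X] :
    List.TFAE
      [@SecondCountableTopology C(X, ℝ) (cxVietoris X),
       @SeparableSpace C(X, ℝ) (cxVietoris X),
       HasCCC (cxVietoris X),
       @LindelofSpace C(X, ℝ) (cxVietoris X),
       CompactSpace X ∧ MetrizableSpace X] := by
  tfae_have 1 → 2
  | h => @SecondCountableTopology.to_separableSpace _ (cxVietoris X) h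
  tfae_have 1 → 4
  | h => @HereditarilyLindelof.to_Lindelof _ (cxVietoris X)
      (@SecondCountableTopology.toHereditarilyLindelof _ (cxVietoris X) h)
  tfae_have 2 → 3
  | h => by
    intro 𝒞 hopen hdisj
    letI := cxVietoris X
    haveI : SeparableSpace C(X,ℝ) := h
    obtain ⟨D, hDc, hDd⟩ := TopologicalSpace.exists_countable_dense C(X,ℝ)
    haveI : Countable D := hDc.to_subtype
    have hpt : ∀ U : 𝒞, ∃ f, f ∈ (U : Set C(X,ℝ)) ∩ D := by
      rintro ⟨U, hU⟩
      obtain ⟨ho, hne⟩ := hopen U hU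
      exact hDd.inter_open_nonempty U ho hne
    choose pt hptm using hpt
    have hinj : Function.Injective (fun U : 𝒞 => (⟨pt U, (hptm U).2⟩ : D)) := by
      intro U V hUV
      have hpteq : pt U = pt V := congrArg Subtype.val hUV
      apply Subtype.ext
      by_contra hne
      have hdis := hdisj U.2 V.2 hne
      exact (Set.disjoint_left.mp hdis) (hptm U).1 (hpteq ▸ (hptm V).1)
    have : Countable 𝒞 := hinj.countable
    exact countable_coe_iff.mp this
  tfae_have 3 → 5
  | h3 => by
    obtain ⟨D, hDc, hDd⟩ := dense_of_ccc h3
    have hm : MetrizableSpace X := metrizable_of_dense D hDc hDd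
    exact ⟨compact_of_pseudo_metrizable hm (fun f => bounded_of_ccc h3 f), hm⟩
  tfae_have 4 → 5
  | h4 => by
    obtain ⟨D, hDc, hDd⟩ := dense_of_lindelof h4
    have hm : MetrizableSpace X := metrizable_of_dense D hDc hDd
    exact ⟨compact_of_pseudo_metrizable hm (fun f => bounded_of_lindelof h4 f), hm⟩
  tfae_have 5 → 1
  | h5 => secondCountable_of_compact_metrizable h5.1 h5.2
  tfae_finish
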